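/- NSLC (Pareto dominance on the two objectives local-competition score and novelty) exhibits spooky action at a distance on the following instance. A point (a, b) ∈ ℝ² Pareto-dominates (c, e) iff a ≥ c, b ≥ e, and (a, b) ≠ (c, e). For population P, the (local competition, novelty) pairs of x₀, x₁, x₂, x₃ are (0, 21/2), (2, 11/2), (1, 11/2), (0, 21/2); the point of x₂ is Pareto-dominated by the point of x₁, and no other point is Pareto-dominated by another. For population P′, the pairs of x₀, x₁, x₂, x₄ are (0, 21/2), (2, 11/2), (1, 6), (0, 23/2); the point of x₀ is Pareto-dominated by the point of x₄, and no other point is Pareto-dominated by another; in particular the point of x₂ is no longer dominated. -/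

import Mathlib

/-- Pareto dominance on ℝ²: `(a, b)` dominates `(c, e)` iff `a ≥ c`, `b ≥ e`,
and the pairs are not equal. -/
def paretoDom (p q : ℝ × ℝ) : Prop :=
  p.1 ≥ q.1 ∧ p.2 ≥ q.2 ∧ p ≠ q

/-- Spookiness of NSLC: for population `P` the (local-competition, novelty)
pairs of `x₀, x₁, x₂, x₃` are `(0, 21/2), (2, 11/2), (1, 11/2), (0, 21/2)`;
`x₁`'s point dominates `x₂`'s and no other point is dominated by another. For
population `P'` the pairs of `x₀, x₁, x₂, x₄` are
`(0, 21/2), (2, 11/2), (1, 6), (0, 23/2)`; `x₄`'s point dominates `x₀`'s and no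
other point is dominated by another; in particular the point of `x₂` is no
longer dominated. -/
theorem nslc_spooky_action :
    let P : Fin 4 → ℝ × ℝ :=
      ![(0, 21 / 2), (2, 11 / 2), (1, 11 / 2), (0, 21 / 2)]
    let Q : Fin 4 → ℝ × ℝ :=
      ![(0, 21 / 2), (2, 11 / 2), (1, 6), (0, 23 / 2)]
    paretoDom (P 1) (P 2) ∧
    (∀ i j : Fin 4, paretoDom (P i) (P j) → i = 1 ∧ j = 2) ∧
    paretoDom (Q 3) (Q 0) ∧
    (∀ i j : Fin 4, paretoDom (Q i) (Q j) → i = 3 ∧ j = 0) ∧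
    ¬ ∃ j : Fin 4, paretoDom (Q j) (Q 2) := by
  intro P Q
  refine ⟨⟨by norm_num [P, Matrix.cons_val_two], by norm_num [P, Matrix.cons_val_two], by simp [P, Prod.ext_iff]⟩, ?_,
    ⟨by norm_num [Q, Matrix.cons_val_three], by norm_num [Q, Matrix.cons_val_three], by simp [Q, Prod.ext_iff]⟩, ?_, ?_⟩
  · intro i j h
    fin_cases i <;> fin_cases j <;>
      simp_all [P, paretoDom, Prod.ext_iff] <;> norm_num at h
  · intro i j h
    fin_cases i <;> fin_cases j <;>
      simp_all [Q, paretoDom, Prod.ext_iff] <;> norm_num at h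
  · rintro ⟨j, h⟩
    fin_cases j <;> simp_all [Q, paretoDom, Prod.ext_iff] <;> norm_num at h
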